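/- Let R be a finite commutative local principal ring. Any matrix A ∈ M₂(R) that is a product of finitely many idempotent matrices is already a product of two idempotent matrices. -/

import Mathlib

open Matrix IsLocalRing

section Aux
variable {R : Type*} [CommRing R]

/-- Auxiliary predicate: the matrix is the identity, or it annihilates a unimodular vector on
both sides. -/
def KrelAux (A : Matrix (Fin 2) (Fin 2) R) : Prop :=
  A = 1 ∨ ((∃ u : Fin 2 → R, (IsUnit (u 0) ∨ IsUnit (u 1)) ∧ A.mulVec u = 0) ∧
    (∃ v : Fin 2 → R, (IsUnit (v 0) ∨ IsUnit (v 1)) ∧ Matrix.vecMul v A = 0))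

lemma krelAux_mul {A B : Matrix (Fin 2) (Fin 2) R} (hA : KrelAux A) (hB : KrelAux B) :
    KrelAux (A * B) := by
  rcases hA with rfl | hA
  · rwa [one_mul]
  rcases hB with rfl | hB
  · rw [mul_one]; exact Or.inr hA
  right
  constructor
  · obtain ⟨u, hu, hBu⟩ := hB.1
    exact ⟨u, hu, by rw [← Matrix.mulVec_mulVec, hBu, Matrix.mulVec_zero]⟩
  · obtain ⟨v, hv, hvA⟩ := hA.2
    exact ⟨v, hv, by rw [← Matrix.vecMul_vecMul, hvA, Matrix.zero_vecMul]⟩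

lemma pow_entry_mem {N : Matrix (Fin 2) (Fin 2) R} {I : Ideal R}
    (hN : ∀ i j, N i j ∈ I) : ∀ k (i j : Fin 2), (N ^ k) i j ∈ I ^ k := by
  intro k
  induction k with
  | zero =>
      intro i j
      rw [pow_zero, Ideal.one_eq_top]
      exact Submodule.mem_top
  | succ k ih =>
      intro i j
      rw [pow_succ, pow_succ, Matrix.mul_apply]
      exact Ideal.sum_mem _ (fun l _ => Ideal.mul_mem_mul (ih i l) (hN l j))

lemma krelAux_of_idem [Finite R] [IsLocalRing R] {E : Matrix (Fin 2) (Fin 2) R}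
    (hE : IsIdempotentElem E) : KrelAux E := by
  by_cases hE1 : E = 1
  · exact Or.inl hE1
  right
  -- some entry of E - 1 is a unit
  have hent : ∃ i j, IsUnit ((E - 1) i j) := by
    by_contra hcon
    push_neg at hcon
    have hart : IsArtinianRing R := isArtinian_of_finite
    obtain ⟨k, hk⟩ : IsNilpotent (maximalIdeal R) := by
      have h := IsArtinianRing.isNilpotent_jacobson_bot (R := R)
      rwa [IsLocalRing.jacobson_eq_maximalIdeal ⊥ bot_ne_top] at h
    have hnil : (E - 1) ^ k = 0 := by
      ext i j
      have := pow_entry_mem (I := maximalIdeal R)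
        (fun i j => (mem_maximalIdeal _).2 (mem_nonunits_iff.2 (hcon i j))) k i j
      rw [hk] at this
      simpa using this
    have hn : IsNilpotent (E - 1) := ⟨k, hnil⟩
    have hu : IsUnit E := by
      have := hn.isUnit_add_right_of_commute isUnit_one (Commute.one_right _)
      rwa [sub_add_cancel] at this
    exact hE1 (hu.mul_left_cancel (by rw [hE.eq, mul_one]))
  obtain ⟨i0, j0, hij⟩ := hent
  have hEN : E * (E - 1) = 0 := by
    rw [Matrix.mul_sub, Matrix.mul_one, hE.eq, sub_self]
  have hNE : (E - 1) * E = 0 := by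
    rw [Matrix.sub_mul, Matrix.one_mul, hE.eq, sub_self]
  constructor
  · refine ⟨fun i => (E - 1) i j0, ?_, ?_⟩
    · fin_cases i0
      · exact Or.inl hij
      · exact Or.inr hij
    · funext i
      have h := congrFun (congrFun hEN i) j0
      rw [Matrix.mul_apply] at h
      simpa [Matrix.mulVec, dotProduct] using h
  · refine ⟨fun j => (E - 1) i0 j, ?_, ?_⟩
    · fin_cases j0
      · exact Or.inl hij
      · exact Or.inr hij
    · funext j
      have h := congrFun (congrFun hNE i0) j
      rw [Matrix.mul_apply] at h
      simpa [Matrix.vecMul, dotProduct] using h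

lemma krelAux_list_prod [Finite R] [IsLocalRing R] (l : List (Matrix (Fin 2) (Fin 2) R))
    (hl : ∀ E ∈ l, IsIdempotentElem E) : KrelAux l.prod := by
  induction l with
  | nil => exact Or.inl List.prod_nil
  | cons E l ih =>
      rw [List.prod_cons]
      exact krelAux_mul (krelAux_of_idem (hl E (List.mem_cons_self (a := E) (l := l))))
        (ih (fun F hF => hl F (List.mem_cons_of_mem E hF)))

lemma one_add_isUnit [IsLocalRing R] {s : R} (hs : ¬ IsUnit s) (t : R) : IsUnit (1 + t * s) := by
  have hm : t * s ∈ maximalIdeal R :=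
    Ideal.mul_mem_left _ t ((mem_maximalIdeal s).2 (mem_nonunits_iff.2 hs))
  have h := IsLocalRing.isUnit_one_sub_self_of_mem_nonunits (-(t * s))
    ((mem_maximalIdeal _).1 (neg_mem hm))
  rwa [sub_neg_eq_add] at h

/-- Solve for dual vectors with prescribed inner product. -/
lemma solve_aux [IsLocalRing R] {w r : Fin 2 → R} (hw : w 0 = 1 ∨ w 1 = 1)
    (hr : r 0 = 1 ∨ r 1 = 1) (a : R) :
    ∃ p q : Fin 2 → R,
      p 0 * w 0 + p 1 * w 1 = 1 ∧ q 0 * r 0 + q 1 * r 1 = 1 ∧ p 0 * q 0 + p 1 * q 1 = a := by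
  rcases hw with hw | hw <;> rcases hr with hr | hr
  · -- w = (1,t), r = (1,s)
    by_cases hs : IsUnit (r 1)
    · obtain ⟨si, hsi⟩ := hs.exists_right_inv
      refine ⟨![1, 0], ![a, si * (1 - a)], ?_, ?_, ?_⟩
      · simp only [Matrix.cons_val_zero, Matrix.cons_val_one, Matrix.head_cons]
        rw [hw]; ring
      · simp only [Matrix.cons_val_zero, Matrix.cons_val_one, Matrix.head_cons]
        rw [hr]; linear_combination (1 - a) * hsi
      · simp only [Matrix.cons_val_zero, Matrix.cons_val_one, Matrix.head_cons]
        ring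
    · obtain ⟨ei, hei⟩ := (one_add_isUnit hs (w 1)).exists_right_inv
      refine ⟨![1 - (ei * (1 + r 1)) * w 1, ei * (1 + r 1)],
        ![1 - (a - 1 + (ei * (1 + r 1)) * w 1) * r 1, a - 1 + (ei * (1 + r 1)) * w 1],
        ?_, ?_, ?_⟩
      · simp only [Matrix.cons_val_zero, Matrix.cons_val_one, Matrix.head_cons]
        rw [hw]; ring
      · simp only [Matrix.cons_val_zero, Matrix.cons_val_one, Matrix.head_cons]
        rw [hr]; ring
      · simp only [Matrix.cons_val_zero, Matrix.cons_val_one, Matrix.head_cons]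
        linear_combination ((a - 1 + ei * (1 + r 1) * w 1) * (1 + r 1)) * hei
  · -- w = (1,t), r = (s,1)
    refine ⟨![1, 0], ![a, 1 - r 0 * a], ?_, ?_, ?_⟩ <;>
      simp only [Matrix.cons_val_zero, Matrix.cons_val_one, Matrix.head_cons]
    · rw [hw]; ring
    · rw [hr]; ring
    · ring
  · -- w = (t,1), r = (1,s)
    refine ⟨![0, 1], ![1 - r 1 * a, a], ?_, ?_, ?_⟩ <;>
      simp only [Matrix.cons_val_zero, Matrix.cons_val_one, Matrix.head_cons]
    · rw [hw]; ring
    · rw [hr]; ring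
    · ring
  · -- w = (t,1), r = (s,1)
    by_cases hs : IsUnit (r 0)
    · obtain ⟨si, hsi⟩ := hs.exists_right_inv
      refine ⟨![0, 1], ![si * (1 - a), a], ?_, ?_, ?_⟩ <;>
        simp only [Matrix.cons_val_zero, Matrix.cons_val_one, Matrix.head_cons]
      · rw [hw]; ring
      · rw [hr]; linear_combination (1 - a) * hsi
      · ring
    · obtain ⟨ei, hei⟩ := (one_add_isUnit hs (w 0)).exists_right_inv
      refine ⟨![ei * (1 + r 0), 1 - (ei * (1 + r 0)) * w 0],
        ![a - 1 + (ei * (1 + r 0)) * w 0, 1 - (a - 1 + (ei * (1 + r 0)) * w 0) * r 0],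
        ?_, ?_, ?_⟩ <;>
        simp only [Matrix.cons_val_zero, Matrix.cons_val_one, Matrix.head_cons]
      · rw [hw]; ring
      · rw [hr]; ring
      · linear_combination ((a - 1 + ei * (1 + r 0) * w 0) * (1 + r 0)) * hei

lemma krelAux_imp [IsLocalRing R] {A : Matrix (Fin 2) (Fin 2) R} (hA : KrelAux A) :
    ∃ E₁ E₂ : Matrix (Fin 2) (Fin 2) R,
      IsIdempotentElem E₁ ∧ IsIdempotentElem E₂ ∧ A = E₁ * E₂ := by
  rcases hA with rfl | ⟨⟨u, hu, hAu⟩, ⟨v, hv, hvA⟩⟩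
  · exact ⟨1, 1, IsIdempotentElem.one, IsIdempotentElem.one, (one_mul 1).symm⟩
  have hAu' : ∀ i, A i 0 * u 0 + A i 1 * u 1 = 0 := by
    intro i
    have := congrFun hAu i
    simpa [Matrix.mulVec, dotProduct, Fin.sum_univ_two] using this
  have hvA' : ∀ j, v 0 * A 0 j + v 1 * A 1 j = 0 := by
    intro j
    have := congrFun hvA j
    simpa [Matrix.vecMul, dotProduct, Fin.sum_univ_two] using this
  -- extract a rank-one factorization A i j = c i * r j with some coordinate of r equal to 1
  obtain ⟨r, c, hr1, hAcr, hc⟩ :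
      ∃ (r c : Fin 2 → R), (r 0 = 1 ∨ r 1 = 1) ∧ (∀ i j, A i j = c i * r j) ∧
        (v 0 * c 0 + v 1 * c 1 = 0) := by
    rcases hu with hu | hu
    · -- u 0 is a unit ⇒ columns proportional to column 1
      obtain ⟨t', ht'⟩ := hu.exists_right_inv
      refine ⟨![-(u 1 * t'), 1], fun i => A i 1, Or.inr rfl, ?_, hvA' 1⟩
      intro i j
      fin_cases j
      · show A i 0 = A i 1 * (-(u 1 * t'))
        linear_combination t' * (hAu' i) - A i 0 * ht'
      · show A i 1 = A i 1 * 1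
        ring
    · -- u 1 is a unit
      obtain ⟨t', ht'⟩ := hu.exists_right_inv
      refine ⟨![1, -(u 0 * t')], fun i => A i 0, Or.inl rfl, ?_, hvA' 0⟩
      intro i j
      fin_cases j
      · show A i 0 = A i 0 * 1
        ring
      · show A i 1 = A i 0 * (-(u 0 * t'))
        linear_combination t' * (hAu' i) - A i 1 * ht'
  obtain ⟨w, a, hw1, hcw⟩ :
      ∃ (w : Fin 2 → R) (a : R), (w 0 = 1 ∨ w 1 = 1) ∧ (∀ i, c i = a * w i) := by
    rcases hv with hv | hv
    · obtain ⟨s', hs'⟩ := hv.exists_right_inv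
      refine ⟨![-(v 1 * s'), 1], c 1, Or.inr rfl, ?_⟩
      intro i
      fin_cases i
      · show c 0 = c 1 * (-(v 1 * s'))
        linear_combination s' * hc - c 0 * hs'
      · show c 1 = c 1 * 1
        ring
    · obtain ⟨s', hs'⟩ := hv.exists_right_inv
      refine ⟨![1, -(v 0 * s')], c 0, Or.inl rfl, ?_⟩
      intro i
      fin_cases i
      · show c 0 = c 0 * 1
        ring
      · show c 1 = c 0 * (-(v 0 * s'))
        linear_combination s' * hc - c 1 * hs'
  obtain ⟨p, q, hpw, hqr, hpq⟩ := solve_aux hw1 hr1 a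
  refine ⟨Matrix.of (fun i j => w i * p j), Matrix.of (fun i j => q i * r j), ?_, ?_, ?_⟩
  · show _ * _ = _
    ext i j
    simp only [Matrix.mul_apply, Matrix.of_apply, Fin.sum_univ_two]
    linear_combination (w i * p j) * hpw
  · show _ * _ = _
    ext i j
    simp only [Matrix.mul_apply, Matrix.of_apply, Fin.sum_univ_two]
    linear_combination (q i * r j) * hqr
  · ext i j
    simp only [Matrix.mul_apply, Matrix.of_apply, Fin.sum_univ_two]
    linear_combination (hAcr i j) + r j * (hcw i) - (w i * r j) * hpq

end Aux

/-- Over a finite commutative local principal ring, any 2×2 matrix that is a product of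
finitely many idempotent matrices is already a product of two idempotent matrices. -/
theorem matrix_prod_idempotents_imp_two (R : Type*) [CommRing R] [Finite R]
    [IsLocalRing R] [IsPrincipalIdealRing R] (A : Matrix (Fin 2) (Fin 2) R)
    (h : ∃ l : List (Matrix (Fin 2) (Fin 2) R),
      l ≠ [] ∧ (∀ E ∈ l, IsIdempotentElem E) ∧ A = l.prod) :
    ∃ E₁ E₂ : Matrix (Fin 2) (Fin 2) R,
      IsIdempotentElem E₁ ∧ IsIdempotentElem E₂ ∧ A = E₁ * E₂ := by
  obtain ⟨l, -, hl, rfl⟩ := h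
  exact krelAux_imp (krelAux_list_prod l hl)
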